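/- Let G be a binary quasigroup of order n with operation * and let k, d ≥ 1. If Per_k(S_{d+1}(G)) > 0 then for every integer m ≥ 0 we have Per_k(S_{d+2m+1}(G)) > 0; moreover, per_k(S_{d+2m+1}(G)) ≥ ((k·n)!/(k!)^n)^m · per_k(S_{d+1}(G)). -/

import Mathlib

/-- The left-to-right product `((a₁ * a₂) * ⋯) * a_m` of a list of elements of `Fin n`
under a binary operation `op`, where `e` is returned for the empty list
(all uses below have nonempty lists). -/
def leftProd {n : ℕ} (op : Fin n → Fin n → Fin n) (e : Fin n) : List (Fin n) → Fin n
  | [] => e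
  | a :: l => l.foldl op a

/-- `SdSet op e d` is the support `S_d(G)` of the `d`-dimensional MDS code
`M(G^[d-1])` of the `(d-1)`-iterated quasigroup `G` with operation `op`:
the set of `(x₁, …, x_d)` with `((…((x₁ * x₂) * x₃) * …) * x_d = e`,
where `e` plays the role of the fixed element `1` of `Fin n`. -/
def SdSet {n : ℕ} (op : Fin n → Fin n → Fin n) (e : Fin n) (d : ℕ) :
    Set (Fin d → Fin n) :=
  {x | leftProd op e (List.ofFn x) = e}

/-- `IsKMultiplex S k K` says that the multiset `K` is a `k`-multiplex over
`S ⊆ (Fin n)^d`: it consists of `k·n` elements of `S` and, for every coordinate `j`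
and every symbol `v`, exactly `k` elements of `K` (counted with multiplicity) have
`j`-th coordinate equal to `v`. -/
def IsKMultiplex {n d : ℕ} (S : Set (Fin d → Fin n)) (k : ℕ)
    (K : Multiset (Fin d → Fin n)) : Prop :=
  Multiset.card K = k * n ∧ (∀ x ∈ K, x ∈ S) ∧
    ∀ (j : Fin d) (v : Fin n), Multiset.card (K.filter (fun x => x j = v)) = k

/-- `Perk S k` is the number of `k`-multiplexes over `S` (the `k`-multipermanent). -/
noncomputable def Perk {n d : ℕ} (S : Set (Fin d → Fin n)) (k : ℕ) : ℕ :=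
  Set.ncard {K : Multiset (Fin d → Fin n) | IsKMultiplex S k K}

/-- `perk S k` is the number of `k`-plexes in `S` (`k`-multiplexes without repeated
elements), i.e. the `k`-permanent. -/
noncomputable def perk {n d : ℕ} (S : Set (Fin d → Fin n)) (k : ℕ) : ℕ :=
  Set.ncard {K : Multiset (Fin d → Fin n) | K.Nodup ∧ IsKMultiplex S k K}


open Finset Function List



/-- pairing decomposition -/
def pairSigma {N n k : ℕ} :
    {F : Fin N → Fin n × Fin k // Function.Bijective F} ≃
      Σ y : Fin N → Fin n, {h : Fin N → Fin k // Function.Bijective fun i => (y i, h i)} where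
  toFun F := ⟨fun i => (F.1 i).1, ⟨fun i => (F.1 i).2, by
    convert F.2 using 1⟩⟩
  invFun p := ⟨fun i => (p.1 i, p.2.1 i), p.2.2⟩
  left_inv F := rfl
  right_inv p := rfl

/-- curry along fibers -/
def fiberCurry {N n k : ℕ} (y : Fin N → Fin n) :
    (Fin N → Fin k) ≃ (∀ v : Fin n, {i // y i = v} → Fin k) where
  toFun h v b := h b.1
  invFun H i := H (y i) ⟨i, rfl⟩
  left_inv h := rfl
  right_inv H := by
    funext v b
    obtain ⟨i, hi⟩ := b
    subst hi
    rfl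

theorem inj_iff_fiber {N n k : ℕ} (y : Fin N → Fin n) (h : Fin N → Fin k) :
    (Function.Injective fun i => (y i, h i)) ↔
      ∀ v, Function.Injective (fiberCurry y h v) := by
  constructor
  · rintro hinj v ⟨i, hi⟩ ⟨j, hj⟩ hij
    have hij' : h i = h j := hij
    have : (y i, h i) = (y j, h j) := by rw [hi, hj, hij']
    exact Subtype.ext (hinj this)
  · intro H i j hij
    have h1 : y i = y j := congrArg Prod.fst hij
    have h2 : h i = h j := congrArg Prod.snd hij
    have := H (y i) (a₁ := ⟨i, rfl⟩) (a₂ := ⟨j, h1.symm⟩) h2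
    exact congrArg Subtype.val this

theorem card_bij_fun {N n k : ℕ} (hN : N = k * n) (y : Fin N → Fin n) :
    Fintype.card {h : Fin N → Fin k // Function.Bijective fun i => (y i, h i)} =
      ∏ v : Fin n, k.descFactorial (Fintype.card {i // y i = v}) := by
  have e1 : {h : Fin N → Fin k // Function.Bijective fun i => (y i, h i)} ≃
      ∀ v : Fin n, {g : {i // y i = v} → Fin k // Function.Injective g} := by
    refine Equiv.trans (Equiv.subtypeEquiv (fiberCurry y) fun h => ?_) Equiv.subtypePiEquivPi
    rw [Fintype.bijective_iff_injective_and_card]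
    simp only [Fintype.card_fin, Fintype.card_prod]
    rw [inj_iff_fiber y h]
    constructor
    · rintro ⟨h1, _⟩; exact h1
    · intro h1; exact ⟨h1, by rw [hN, Nat.mul_comm]⟩
  rw [Fintype.card_congr e1, Fintype.card_pi]
  refine Finset.prod_congr rfl fun v _ => ?_
  rw [Fintype.card_congr (Equiv.subtypeInjectiveEquivEmbedding _ _),
    Fintype.card_embedding_eq, Fintype.card_fin]

theorem count_fiberk (n k : ℕ) :
    ((Finset.univ.filter (fun y : Fin (k * n) → Fin n =>
        ∀ v, (Finset.univ.filter fun i => y i = v).card = k)).card) * (k.factorial) ^ n =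
      (k * n).factorial := by
  classical
  set N := k * n with hN
  -- total count of bijections
  have h1 : Fintype.card {F : Fin N → Fin n × Fin k // Function.Bijective F} = N.factorial := by
    have e2 : {F : Fin N → Fin n × Fin k // Function.Bijective F} ≃ (Fin N ≃ Fin n × Fin k) :=
      ⟨fun F => Equiv.ofBijective F.1 F.2, fun E => ⟨E, E.bijective⟩,
        fun F => rfl, fun E => Equiv.ext fun _ => rfl⟩
    rw [Fintype.card_congr e2,
      Fintype.card_equiv (Fintype.equivOfCardEq (by simp [hN, mul_comm]))]
    simp
  rw [Fintype.card_congr pairSigma, Fintype.card_sigma] at h1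
  have h2 : ∀ y : Fin N → Fin n,
      Fintype.card {h : Fin N → Fin k // Function.Bijective fun i => (y i, h i)} =
        ∏ v : Fin n, k.descFactorial ((Finset.univ.filter fun i => y i = v).card) := by
    intro y
    rw [card_bij_fun hN y]
    exact Finset.prod_congr rfl fun v _ => by rw [Fintype.card_subtype]
  simp only [h2] at h1
  rw [← h1]
  rw [← Finset.sum_filter_add_sum_filter_not Finset.univ
    (fun y : Fin N → Fin n => ∀ v, (Finset.univ.filter fun i => y i = v).card = k)]
  have hz : ∀ y ∈ Finset.univ.filter (fun y : Fin N → Fin n =>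
      ¬ ∀ v, (Finset.univ.filter fun i => y i = v).card = k),
      ∏ v : Fin n, k.descFactorial ((Finset.univ.filter fun i => y i = v).card) = 0 := by
    intro y hy
    rw [Finset.mem_filter] at hy
    push_neg at hy
    obtain ⟨v0, hv0⟩ := hy.2
    by_cases hall : ∀ v, (Finset.univ.filter fun i => y i = v).card ≤ k
    · exfalso
      have hsum : (Finset.univ : Finset (Fin N)).card =
          ∑ v : Fin n, (Finset.univ.filter fun i => y i = v).card :=
        Finset.card_eq_sum_card_fiberwise fun i _ => Finset.mem_univ (y i)
      have hlt : ∑ v : Fin n, (Finset.univ.filter fun i => y i = v).card <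
          ∑ _v : Fin n, k :=
        Finset.sum_lt_sum (fun v _ => hall v)
          ⟨v0, Finset.mem_univ v0, lt_of_le_of_ne (hall v0) hv0⟩
      simp only [Finset.card_univ, Fintype.card_fin, Finset.sum_const, smul_eq_mul] at hsum hlt
      rw [← hsum] at hlt
      rw [hN] at hlt
      rw [Nat.mul_comm] at hlt
      exact lt_irrefl _ hlt
    · push_neg at hall
      obtain ⟨v1, hv1⟩ := hall
      exact Finset.prod_eq_zero (Finset.mem_univ v1)
        (Nat.descFactorial_eq_zero_iff_lt.2 hv1)
  rw [Finset.sum_eq_zero hz, Nat.add_zero]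
  rw [Finset.sum_congr rfl (fun y hy => ?_), Finset.sum_const, smul_eq_mul]
  have hyk := (Finset.mem_filter.1 hy).2
  rw [Finset.prod_congr rfl (fun v _ => by rw [hyk v]), Finset.prod_const,
    Nat.descFactorial_self, Finset.card_univ, Fintype.card_fin]

section Quasi

variable {n : ℕ} (op : Fin n → Fin n → Fin n) (e : Fin n)

/-- the unique `z` with `(e * a) * z = e`. -/
noncomputable def qinv (a : Fin n) : Fin n :=
  @Function.invFun _ _ ⟨e⟩ (op (op e a)) e

variable {hop' : True}

theorem qinv_spec (hop : ∀ a : Fin n, Function.Bijective (op a) ∧ Function.Bijective (fun x => op x a)) (a : Fin n) : op (op e a) (qinv op e a) = e := by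
  have : Nonempty (Fin n) := ⟨e⟩
  exact Function.invFun_eq ((hop _).1.2 e)

theorem qinv_inj (hop : ∀ a : Fin n, Function.Bijective (op a) ∧ Function.Bijective (fun x => op x a)) : Function.Injective (qinv op e) := by
  intro a b hab
  have h1 := qinv_spec op e hop a
  have h2 := qinv_spec op e hop b
  rw [hab] at h1
  have : op e a = op e b := (hop (qinv op e b)).2.1 (h1.trans h2.symm)
  exact (hop e).1.1 this

theorem qinv_eq_iff (hop : ∀ a : Fin n, Function.Bijective (op a) ∧ Function.Bijective (fun x => op x a)) (a v : Fin n) :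
    qinv op e a = v ↔ a = @Function.invFun _ _ ⟨e⟩ (qinv op e) v := by
  have : Nonempty (Fin n) := ⟨e⟩
  have hs : Function.Surjective (qinv op e) :=
    (Finite.injective_iff_surjective.1 (qinv_inj op e hop))
  constructor
  · intro h
    apply qinv_inj op e hop
    rw [h, Function.invFun_eq (hs v)]
  · intro h
    rw [h, Function.invFun_eq (hs v)]

theorem leftProd_concat (L : List (Fin n)) (hL : L ≠ []) (a : Fin n) :
    leftProd op e (L ++ [a]) = op (leftProd op e L) a := by
  cases L with
  | nil => exact absurd rfl hL
  | cons x t => simp [leftProd, List.foldl_append]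

end Quasi

section Build

variable {n : ℕ} (op : Fin n → Fin n → Fin n) (e : Fin n) {D : ℕ}

/-- extension of a `D`-tuple by `(a, qinv a)`. -/
noncomputable def extFn (x : Fin D → Fin n) (a : Fin n) : Fin (D + 2) → Fin n :=
  Fin.snoc (Fin.snoc x a) (qinv op e a)

theorem ofFn_snoc' {α : Type*} {m : ℕ} (u : Fin m → α) (b : α) :
    List.ofFn (Fin.snoc u b : Fin (m+1) → α) = List.ofFn u ++ [b] := by
  rw [List.ofFn_succ']
  simp [Fin.snoc_castSucc, Fin.snoc_last, List.concat_eq_append]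

theorem ofFn_extFn (x : Fin D → Fin n) (a : Fin n) :
    List.ofFn (extFn op e x a) = List.ofFn x ++ [a, qinv op e a] := by
  show List.ofFn (Fin.snoc (Fin.snoc x a) (qinv op e a) : Fin (D+1+1) → Fin n) = _
  rw [ofFn_snoc', ofFn_snoc', List.append_assoc]
  rfl

theorem extFn_trunc (x : Fin D → Fin n) (a : Fin n) (j : Fin D) :
    extFn op e x a (Fin.castSucc (Fin.castSucc j)) = x j := by
  simp [extFn, Fin.snoc_castSucc]

theorem extFn_mid (x : Fin D → Fin n) (a : Fin n) :
    extFn op e x a (Fin.castSucc (Fin.last D)) = a := by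
  simp [extFn, Fin.snoc_castSucc, Fin.snoc_last]

theorem extFn_last (x : Fin D → Fin n) (a : Fin n) :
    extFn op e x a (Fin.last (D + 1)) = qinv op e a := by
  simp [extFn, Fin.snoc_last]

theorem extFn_mem (hop : ∀ a : Fin n, Function.Bijective (op a) ∧
      Function.Bijective (fun x => op x a))
    (hD : D ≠ 0) {x : Fin D → Fin n} (hx : x ∈ SdSet op e D) (a : Fin n) :
    extFn op e x a ∈ SdSet op e (D + 2) := by
  have hne : List.ofFn x ≠ [] := by
    intro h
    have := congrArg List.length h
    simp at this
    exact hD this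
  show leftProd op e (List.ofFn (extFn op e x a)) = e
  rw [ofFn_extFn]
  have : List.ofFn x ++ [a, qinv op e a] = (List.ofFn x ++ [a]) ++ [qinv op e a] := by
    simp
  rw [this, leftProd_concat op e _ (by simp) _, leftProd_concat op e _ hne _]
  rw [show leftProd op e (List.ofFn x) = e from hx]
  exact qinv_spec op e hop a

end Build

section Counting2

variable {α : Type*}

theorem card_filter_ofFn {N : ℕ} (g : Fin N → α) (p : α → Prop) [DecidablePred p] :
    Multiset.card ((↑(List.ofFn g) : Multiset α).filter p) =
      (Finset.univ.filter (fun i => p (g i))).card := by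
  rw [← Fin.univ_val_map]
  rw [← Multiset.countP_eq_card_filter, Multiset.countP_map]
  rw [Finset.card_def, Finset.filter_val]

end Counting2

theorem card_filter_fin_cast {a b : ℕ} (h : a = b) (p : Fin b → Prop) [DecidablePred p] :
    (Finset.univ.filter (fun i : Fin a => p (Fin.cast h i))).card =
      (Finset.univ.filter p).card := by
  subst h
  simp [Fin.cast_refl]

theorem ofFn_get_cast {N : ℕ} (L : List α) (h : L.length = N) :
    List.ofFn (fun i : Fin N => L.get (Fin.cast h.symm i)) = L := by
  subst h
  exact List.ofFn_get L

theorem card_filter_list {N : ℕ} (L : List α) (q : α → Prop) [DecidablePred q]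
    (hlen : L.length = N) :
    Multiset.card ((↑L : Multiset α).filter q) =
      (Finset.univ.filter (fun i : Fin N => q (L.get (Fin.cast hlen.symm i)))).card := by
  conv_lhs => rw [← List.ofFn_get L]
  rw [card_filter_ofFn]
  exact (card_filter_fin_cast hlen.symm (fun i => q (L.get i))).symm

section BuildM

variable {n : ℕ} (op : Fin n → Fin n → Fin n) (e : Fin n) {D k : ℕ}

noncomputable def buildM (L : List (Fin D → Fin n)) (hlen : L.length = k * n)
    (y : Fin (k * n) → Fin n) : Multiset (Fin (D + 2) → Fin n) :=
  ↑(List.ofFn fun i : Fin (k * n) => extFn op e (L.get (Fin.cast hlen.symm i)) (y i))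

theorem buildM_multiplex
    (hop : ∀ a : Fin n, Function.Bijective (op a) ∧ Function.Bijective (fun x => op x a))
    (hD : D ≠ 0) {L : List (Fin D → Fin n)} {hlen : L.length = k * n}
    {y : Fin (k * n) → Fin n}
    (hL : ∀ x ∈ L, x ∈ SdSet op e D)
    (hcnt : ∀ (j : Fin D) (v : Fin n),
      Multiset.card ((↑L : Multiset (Fin D → Fin n)).filter (fun x => x j = v)) = k)
    (hy : ∀ v, (Finset.univ.filter fun i => y i = v).card = k) :
    IsKMultiplex (SdSet op e (D + 2)) k (buildM op e L hlen y) := by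
  refine ⟨by simp [buildM], ?_, ?_⟩
  · intro x hx
    rw [buildM, Multiset.mem_coe, List.mem_ofFn] at hx
    obtain ⟨i, rfl⟩ := hx
    exact extFn_mem op e hop hD (hL _ (L.get_mem _)) (y i)
  · intro j v
    rw [buildM, card_filter_ofFn]
    induction j using Fin.lastCases with
    | last =>
      simp only [extFn_last]
      rw [Finset.filter_congr (fun i _ => qinv_eq_iff op e hop (y i) v)]
      exact hy _
    | cast j' =>
      induction j' using Fin.lastCases with
      | last =>
        simp only [extFn_mid]
        exact hy v
      | cast j'' =>
        simp only [extFn_trunc]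
        rw [← card_filter_list L (fun x => x j'' = v) hlen]
        exact hcnt j'' v

theorem buildM_map_trunc {L : List (Fin D → Fin n)} {hlen : L.length = k * n}
    {y : Fin (k * n) → Fin n} :
    (buildM op e L hlen y).map
        (fun z (j : Fin D) => z (Fin.castSucc (Fin.castSucc j))) =
      (↑L : Multiset (Fin D → Fin n)) := by
  rw [buildM, Multiset.map_coe, List.map_ofFn]
  rw [show ((fun z (j : Fin D) => z (Fin.castSucc (Fin.castSucc j))) ∘
      fun i : Fin (k*n) => extFn op e (L.get (Fin.cast hlen.symm i)) (y i))
      = fun i : Fin (k*n) => L.get (Fin.cast hlen.symm i) from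
    funext fun i => funext fun j => extFn_trunc op e _ _ j]
  rw [ofFn_get_cast L hlen]

theorem buildM_nodup {L : List (Fin D → Fin n)} {hlen : L.length = k * n}
    {y : Fin (k * n) → Fin n} (hnd : L.Nodup) :
    (buildM op e L hlen y).Nodup := by
  rw [buildM, Multiset.coe_nodup, List.nodup_ofFn]
  intro i j hij
  have h1 : L.get (Fin.cast hlen.symm i) = L.get (Fin.cast hlen.symm j) := by
    funext j'
    have h2 := congrFun hij (Fin.castSucc (Fin.castSucc j'))
    simp only [extFn_trunc] at h2
    exact h2
  have hc := (List.nodup_iff_injective_get.1 hnd) h1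
  have hv : (i : ℕ) = (j : ℕ) := by simpa using congrArg Fin.val hc
  exact Fin.ext hv

end BuildM

section Sorting

variable {n D : ℕ}

def fr (a b : Fin D → Fin n) : Prop :=
  ((Fintype.equivFin (Fin D → Fin n)) a : ℕ) ≤ ((Fintype.equivFin (Fin D → Fin n)) b : ℕ)

noncomputable instance : DecidableRel (fr (n := n) (D := D)) := fun _ _ => Nat.decLe _ _

instance : IsTrans (Fin D → Fin n) fr := ⟨fun _ _ _ => Nat.le_trans⟩

instance : IsAntisymm (Fin D → Fin n) fr :=
  ⟨fun _ _ h1 h2 => (Fintype.equivFin _).injective (Fin.val_injective (Nat.le_antisymm h1 h2))⟩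

instance : IsTotal (Fin D → Fin n) fr := ⟨fun a b => Nat.le_total _ _⟩

noncomputable def sortList (K : Multiset (Fin D → Fin n)) : List (Fin D → Fin n) :=
  K.sort fr

theorem sortList_coe (K : Multiset (Fin D → Fin n)) : ↑(sortList K) = K :=
  Multiset.sort_eq K _

theorem sortList_length (K : Multiset (Fin D → Fin n)) :
    (sortList K).length = Multiset.card K := by
  rw [← Multiset.coe_card, sortList_coe]

theorem sortList_nodup (K : Multiset (Fin D → Fin n)) (h : K.Nodup) :
    (sortList K).Nodup := by
  rw [← Multiset.coe_nodup, sortList_coe]; exact h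

end Sorting

section Fin2

theorem multiset_card_finite (α : Type*) [Fintype α] [DecidableEq α] (N : ℕ) :
    {K : Multiset α | Multiset.card K = N}.Finite := by
  have h : {K : Multiset α | Multiset.card K = N} =
      Set.range (fun s : Sym α N => (s : Multiset α)) := by
    ext K
    constructor
    · intro hK; exact ⟨⟨K, hK⟩, rfl⟩
    · rintro ⟨⟨s, hs⟩, rfl⟩; exact hs
  rw [h]
  exact Set.finite_range _

theorem multiplex_set_finite {n d : ℕ} (S : Set (Fin d → Fin n)) (k : ℕ) :
    {K : Multiset (Fin d → Fin n) | IsKMultiplex S k K}.Finite :=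
  (multiset_card_finite _ (k * n)).subset (fun _ h => h.1)

theorem plex_set_finite {n d : ℕ} (S : Set (Fin d → Fin n)) (k : ℕ) :
    {K : Multiset (Fin d → Fin n) | K.Nodup ∧ IsKMultiplex S k K}.Finite :=
  (multiset_card_finite _ (k * n)).subset (fun _ h => h.2.1)

theorem y0_exists (n k : ℕ) :
    ∃ y : Fin (k * n) → Fin n,
      ∀ v, (Finset.univ.filter fun i => y i = v).card = k := by
  refine ⟨fun i => (finProdFinEquiv.symm i).2, fun v => ?_⟩
  have h1 : (Finset.univ.filter fun i : Fin (k * n) => (finProdFinEquiv.symm i).2 = v).card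
      = (Finset.univ.filter fun p : Fin k × Fin n => p.2 = v).card := by
    apply Finset.card_equiv finProdFinEquiv.symm
    intro i
    simp
  rw [h1, show (Finset.univ.filter fun p : Fin k × Fin n => p.2 = v)
      = Finset.univ ×ˢ {v} from by
    ext p
    simp only [Finset.mem_filter, Finset.mem_univ, true_and, Finset.mem_product,
      Finset.mem_singleton], Finset.card_product]
  simp

end Fin2

section Step

variable {n : ℕ} (op : Fin n → Fin n → Fin n) (e : Fin n) {k D : ℕ}

theorem extFn_inj1 {x x' : Fin D → Fin n} {a a' : Fin n}
    (h : extFn op e x a = extFn op e x' a') : x = x' ∧ a = a' := by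
  constructor
  · funext j
    have := congrFun h (Fin.castSucc (Fin.castSucc j))
    rwa [extFn_trunc, extFn_trunc] at this
  · have := congrFun h (Fin.castSucc (Fin.last D))
    rwa [extFn_mid, extFn_mid] at this

theorem step_exists
    (hop : ∀ a : Fin n, Function.Bijective (op a) ∧ Function.Bijective (fun x => op x a))
    (hD : D ≠ 0) (K : Multiset (Fin D → Fin n))
    (hK : IsKMultiplex (SdSet op e D) k K) :
    ∃ K', IsKMultiplex (SdSet op e (D + 2)) k K' := by
  obtain ⟨y, hy⟩ := y0_exists n k
  have hlen : K.toList.length = k * n := by rw [Multiset.length_toList, hK.1]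
  refine ⟨buildM op e K.toList hlen y, buildM_multiplex op e hop hD ?_ ?_ hy⟩
  · intro x hx
    exact hK.2.1 x (by rwa [← Multiset.mem_toList])
  · intro j v
    rw [Multiset.coe_toList]
    exact hK.2.2 j v

noncomputable def phiMap :
    (Multiset (Fin D → Fin n)) × (Fin (k * n) → Fin n) → Multiset (Fin (D + 2) → Fin n) :=
  fun p =>
    if h : (sortList p.1).length = k * n then buildM op e (sortList p.1) h p.2 else 0

/-- Tcard: number of balanced colourings -/
def Tcard (n k : ℕ) : ℕ :=
  (Finset.univ.filter (fun y : Fin (k * n) → Fin n =>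
    ∀ v, (Finset.univ.filter fun i => y i = v).card = k)).card

theorem step_perk
    (hop : ∀ a : Fin n, Function.Bijective (op a) ∧ Function.Bijective (fun x => op x a))
    (hD : D ≠ 0) :
    Tcard n k * perk (SdSet op e D) k ≤ perk (SdSet op e (D + 2)) k := by
  classical
  set A := {K : Multiset (Fin D → Fin n) | K.Nodup ∧ IsKMultiplex (SdSet op e D) k K} with hA
  set T : Set (Fin (k * n) → Fin n) :=
    {y | ∀ v, (Finset.univ.filter fun i => y i = v).card = k} with hT
  set B := {K' : Multiset (Fin (D + 2) → Fin n) |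
    K'.Nodup ∧ IsKMultiplex (SdSet op e (D + 2)) k K'} with hB
  have hlen : ∀ p : (Multiset (Fin D → Fin n)) × (Fin (k * n) → Fin n),
      p ∈ A ×ˢ T → (sortList p.1).length = k * n := by
    intro p hp
    rw [sortList_length]
    exact hp.1.2.1
  -- image inside B
  have hsub : phiMap op e '' (A ×ˢ T) ⊆ B := by
    rintro _ ⟨p, hp, rfl⟩
    have h := hlen p hp
    rw [phiMap, dif_pos h]
    constructor
    · exact buildM_nodup op e (sortList_nodup _ hp.1.1)
    · refine buildM_multiplex op e hop hD ?_ ?_ hp.2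
      · intro x hx
        refine hp.1.2.2.1 x ?_
        rw [← sortList_coe p.1]
        exact Multiset.mem_coe.2 hx
      · intro j v
        rw [sortList_coe]
        exact hp.1.2.2.2 j v
  -- injectivity
  have hinj : Set.InjOn (phiMap op e) (A ×ˢ T) := by
    rintro p hp q hq hpq
    have h1 := hlen p hp
    have h2 := hlen q hq
    simp only [phiMap] at hpq
    rw [dif_pos h1, dif_pos h2] at hpq
    have hK : p.1 = q.1 := by
      have := congrArg
        (Multiset.map (fun z (j : Fin D) => z (Fin.castSucc (Fin.castSucc j)))) hpq
      rwa [buildM_map_trunc, buildM_map_trunc, sortList_coe, sortList_coe] at this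
    have hnd : (sortList p.1).Nodup := sortList_nodup _ hp.1.1
    refine Prod.ext hK (funext fun i => ?_)
    have hmem : extFn op e ((sortList p.1).get (Fin.cast h1.symm i)) (p.2 i) ∈
        buildM op e (sortList q.1) h2 q.2 := by
      rw [← hpq, buildM, Multiset.mem_coe, List.mem_ofFn]
      exact ⟨i, rfl⟩
    rw [buildM, Multiset.mem_coe, List.mem_ofFn] at hmem
    obtain ⟨j, hj⟩ := hmem
    obtain ⟨hx, ha⟩ := extFn_inj1 op e hj
    have hsl : sortList q.1 = sortList p.1 := by rw [hK]
    rw [List.get_of_eq hsl] at hx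
    have hidx := (List.nodup_iff_injective_get.1 hnd) hx
    have hv : (j : ℕ) = (i : ℕ) := by simpa using congrArg Fin.val hidx
    have hij : j = i := Fin.ext hv
    rw [← ha, hij]
  -- cardinalities
  have hBfin : B.Finite := plex_set_finite _ _
  have h3 : (phiMap op e '' (A ×ˢ T)).ncard = (A ×ˢ T).ncard :=
    Set.ncard_image_of_injOn hinj
  have h4 : (A ×ˢ T).ncard = A.ncard * T.ncard := by
    have h := Nat.card_congr (Equiv.Set.prod A T)
    rw [Nat.card_prod] at h
    rw [← Nat.card_coe_set_eq (A ×ˢ T), h, Nat.card_coe_set_eq, Nat.card_coe_set_eq]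
  have h5 : T.ncard = Tcard n k := by
    rw [Set.ncard_eq_toFinset_card' T, Tcard]
    congr 1
    ext y
    simp only [Set.mem_toFinset, hT, Set.mem_setOf_eq, Finset.mem_filter, Finset.mem_univ,
      true_and]
  have h6 : (phiMap op e '' (A ×ˢ T)).ncard ≤ B.ncard :=
    Set.ncard_le_ncard hsub hBfin
  have : Tcard n k * A.ncard ≤ B.ncard := by
    rw [← h5, Nat.mul_comm, ← h4, ← h3]
    exact h6
  exact this

end Step

/-- For a binary quasigroup `op` of order `n` and `k, d ≥ 1`, if
`Per_k(S_{d+1}(G)) > 0` then for every `m ≥ 0` we have `Per_k(S_{d+2m+1}(G)) > 0`,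
and moreover `per_k(S_{d+2m+1}(G)) ≥ ((kn)!/(k!)^n)^m · per_k(S_{d+1}(G))`. -/
theorem perk_lift_two_dims {n : ℕ} (op : Fin n → Fin n → Fin n) (e : Fin n)
    (hop : ∀ a : Fin n, Function.Bijective (op a) ∧ Function.Bijective (fun x => op x a))
    (k d : ℕ) (hk : 1 ≤ k) (hd : 1 ≤ d)
    (hpos : 0 < Perk (SdSet op e (d + 1)) k) :
    ∀ m : ℕ,
      0 < Perk (SdSet op e (d + 2 * m + 1)) k ∧
      (((k * n).factorial : ℝ) / (k.factorial : ℝ) ^ n) ^ m *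
          (perk (SdSet op e (d + 1)) k : ℝ) ≤
        (perk (SdSet op e (d + 2 * m + 1)) k : ℝ) := by
  classical
  have hTfact : Tcard n k * (k.factorial) ^ n = (k * n).factorial := count_fiberk n k
  have hk0 : ((k.factorial : ℝ)) ^ n ≠ 0 :=
    pow_ne_zero _ (Nat.cast_ne_zero.2 (Nat.factorial_ne_zero k))
  have hCreal : ((Tcard n k : ℝ)) = ((k * n).factorial : ℝ) / (k.factorial : ℝ) ^ n := by
    rw [eq_div_iff hk0]
    exact_mod_cast hTfact
  have hC0 : (0 : ℝ) ≤ ((k * n).factorial : ℝ) / (k.factorial : ℝ) ^ n := by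
    rw [← hCreal]
    exact Nat.cast_nonneg _
  intro m
  induction m with
  | zero =>
    refine ⟨hpos, ?_⟩
    rw [pow_zero, one_mul]
  | succ m ih =>
    obtain ⟨ihpos, ihineq⟩ := ih
    have harith : d + 2 * (m + 1) + 1 = (d + 2 * m + 1) + 2 := by ring
    have hD0 : d + 2 * m + 1 ≠ 0 := by omega
    have hne : {K | IsKMultiplex (SdSet op e (d + 2 * m + 1)) k K}.Nonempty := by
      by_contra h
      rw [Set.not_nonempty_iff_eq_empty] at h
      rw [Perk, h, Set.ncard_empty] at ihpos
      omega
    obtain ⟨K, hK⟩ := hne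
    obtain ⟨K', hK'⟩ := step_exists op e hop hD0 K hK
    have hpos2 : 0 < Perk (SdSet op e ((d + 2 * m + 1) + 2)) k := by
      rw [Perk, Set.ncard_pos (multiplex_set_finite _ k)]
      exact ⟨K', hK'⟩
    have hstep := step_perk op e (k := k) (D := d + 2 * m + 1) hop hD0
    have hcast : (Tcard n k : ℝ) * (perk (SdSet op e (d + 2 * m + 1)) k : ℝ) ≤
        (perk (SdSet op e ((d + 2 * m + 1) + 2)) k : ℝ) := by
      exact_mod_cast hstep
    constructor
    · rw [harith]
      exact hpos2
    · rw [harith]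
      calc (((k * n).factorial : ℝ) / (k.factorial : ℝ) ^ n) ^ (m + 1) *
            (perk (SdSet op e (d + 1)) k : ℝ)
          = (((k * n).factorial : ℝ) / (k.factorial : ℝ) ^ n) *
            ((((k * n).factorial : ℝ) / (k.factorial : ℝ) ^ n) ^ m *
              (perk (SdSet op e (d + 1)) k : ℝ)) := by ring
        _ ≤ (((k * n).factorial : ℝ) / (k.factorial : ℝ) ^ n) *
            (perk (SdSet op e (d + 2 * m + 1)) k : ℝ) :=
          mul_le_mul_of_nonneg_left ihineq hC0
        _ = (Tcard n k : ℝ) * (perk (SdSet op e (d + 2 * m + 1)) k : ℝ) := by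
          rw [hCreal]
        _ ≤ (perk (SdSet op e ((d + 2 * m + 1) + 2)) k : ℝ) := hcast
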